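/- For all integers r ≥ 2, k with 1 ≤ k ≤ r−1, and n with 1 ≤ n ≤ r−1−k, the identity Σ_{m=0}^{r−1−k} C(m+k, k) C(r, m+k+1) (−1)^{m−n} C(m−2, n−1) = −n · C(k+n+2, k+2) / (k+n+2) holds, where C(m−2, n−1) uses generalized conventions C(−2, n−1) = (−1)^{n−1} n and C(−1, n−1) = (−1)^{n−1}, and C(m−2, n−1) = 0 for 2 ≤ m ≤ n. -/

import Mathlib

/-- Generalized binomial coefficient `C(m-2, n-1)` with the conventions
`C(-2, n-1) = (-1)^(n-1) * n` and `C(-1, n-1) = (-1)^(n-1)`. -/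
def gchooseM2 (m n : ℕ) : ℚ :=
  if m = 0 then (-1) ^ (n - 1) * n
  else if m = 1 then (-1) ^ (n - 1)
  else ((m - 2).choose (n - 1) : ℚ)

lemma gchooseM2_pascal (m n : ℕ) (hn : 1 ≤ n) :
    gchooseM2 (m + 1) (n + 1) = gchooseM2 m (n + 1) + gchooseM2 m n := by
  obtain ⟨n', rfl⟩ : ∃ n', n = n' + 1 := ⟨n - 1, by omega⟩
  match m with
  | 0 =>
    simp only [gchooseM2]
    norm_num
    ring
  | 1 =>
    simp only [gchooseM2]
    norm_num [Nat.choose_eq_zero_of_lt (show 0 < n' + 1 by omega)]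
    ring
  | (m' + 2) =>
    simp only [gchooseM2]
    split_ifs <;> try first | contradiction | omega
    rw [show m' + 2 + 1 - 2 = m' + 1 by omega, show m' + 2 - 2 = m' by omega,
      show n' + 1 + 1 - 1 = n' + 1 by omega, show n' + 1 - 1 = n' by omega,
      Nat.choose_succ_succ]
    push_cast
    ring

lemma gchooseM2_one (m : ℕ) : gchooseM2 m 1 = 1 := by
  match m with
  | 0 => simp [gchooseM2]
  | 1 => simp [gchooseM2]
  | (m' + 2) => simp [gchooseM2]

/-- recurrence for the alternating sum -/
lemma recA (t n : ℕ) (hn : 1 ≤ n) :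
    (∑ m ∈ Finset.range (t + 2), (-1 : ℚ) ^ m * ((t + 1).choose m : ℚ) * gchooseM2 m (n + 1))
      = - ∑ m ∈ Finset.range (t + 1), (-1 : ℚ) ^ m * (t.choose m : ℚ) * gchooseM2 m n := by
  rw [Finset.sum_range_succ'
    (fun m => (-1 : ℚ) ^ m * ((t + 1).choose m : ℚ) * gchooseM2 m (n + 1)) (t + 1)]
  have step : ∀ i, (-1 : ℚ) ^ (i + 1) * (((t + 1).choose (i + 1) : ℕ) : ℚ) * gchooseM2 (i + 1) (n + 1)
      = ((-1) ^ (i + 1) * (t.choose (i + 1) : ℚ) * gchooseM2 (i + 1) (n + 1)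
          - (-1) ^ i * (t.choose i : ℚ) * gchooseM2 i (n + 1))
        - (-1) ^ i * (t.choose i : ℚ) * gchooseM2 i n := by
    intro i
    rw [Nat.choose_succ_succ, gchooseM2_pascal i n hn]
    push_cast
    ring
  rw [Finset.sum_congr rfl (fun i _ => step i), Finset.sum_sub_distrib, Finset.sum_sub_distrib]
  have e1 : (∑ x ∈ Finset.range (t + 1),
        (-1 : ℚ) ^ (x + 1) * (t.choose (x + 1) : ℚ) * gchooseM2 (x + 1) (n + 1))
      - (∑ x ∈ Finset.range (t + 1), (-1 : ℚ) ^ x * (t.choose x : ℚ) * gchooseM2 x (n + 1))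
      = (-1 : ℚ) ^ (t + 1) * (t.choose (t + 1) : ℚ) * gchooseM2 (t + 1) (n + 1)
        - (-1 : ℚ) ^ 0 * (t.choose 0 : ℚ) * gchooseM2 0 (n + 1) := by
    rw [← Finset.sum_sub_distrib]
    exact Finset.sum_range_sub (fun m => (-1 : ℚ) ^ m * (t.choose m : ℚ) * gchooseM2 m (n + 1)) (t + 1)
  simp only [Nat.choose_succ_self, Nat.cast_zero, mul_zero, zero_mul, pow_zero, one_mul,
    Nat.choose_zero_right, Nat.cast_one, zero_sub] at e1 ⊢
  linarith [e1]

/-- The alternating binomial sum against `gchooseM2 · n` vanishes once `n ≤ s`. -/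
lemma lemA : ∀ n, 1 ≤ n → ∀ s, n ≤ s →
    (∑ m ∈ Finset.range (s + 1), (-1 : ℚ) ^ m * (s.choose m : ℚ) * gchooseM2 m n) = 0 := by
  intro n hn
  induction n, hn using Nat.le_induction with
  | base =>
    intro s hs
    have h : (∑ m ∈ Finset.range (s + 1), (-1 : ℤ) ^ m * (s.choose m : ℤ)) = 0 :=
      Int.alternating_sum_range_choose_of_ne (by omega)
    have : ((∑ m ∈ Finset.range (s + 1), (-1 : ℤ) ^ m * (s.choose m : ℤ) : ℤ) : ℚ) = 0 := by
      rw [h]; norm_num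
    push_cast at this
    calc (∑ m ∈ Finset.range (s + 1), (-1 : ℚ) ^ m * (s.choose m : ℚ) * gchooseM2 m 1)
        = ∑ m ∈ Finset.range (s + 1), (-1 : ℚ) ^ m * (s.choose m : ℚ) := by
          refine Finset.sum_congr rfl fun m _ => by rw [gchooseM2_one, mul_one]
      _ = 0 := this
  | succ n hn ih =>
    intro s hs
    obtain ⟨t, rfl⟩ : ∃ t, s = t + 1 := ⟨s - 1, by omega⟩
    rw [show t + 1 + 1 = t + 2 from rfl, recA t n hn, ih t (by omega), neg_zero]

lemma lemM (k n : ℕ) (hk1 : 1 ≤ k) (hn1 : 1 ≤ n) : ∀ d,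
    (∑ m ∈ Finset.range (n + 1 + d), ((m + k).choose k : ℚ) *
        ((n + k + 1 + d).choose (m + k + 1) : ℚ) * (-1 : ℚ) ^ (m + n) * gchooseM2 m n) =
      -(n : ℚ) * ((k + n + 2).choose (k + 2) : ℚ) / ((k : ℚ) + n + 2) := by
  intro d
  induction d with
  | zero =>
    obtain ⟨n', rfl⟩ : ∃ n', n = n' + 1 := ⟨n - 1, by omega⟩
    set f : ℕ → ℚ := fun m => ((m + k).choose k : ℚ) *
        ((n' + 1 + k + 1 + 0).choose (m + k + 1) : ℚ) * (-1 : ℚ) ^ (m + (n' + 1)) *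
        gchooseM2 m (n' + 1) with hf
    have hsplit : (∑ m ∈ Finset.range (n' + 1 + 1 + 0), f m)
        = (∑ i ∈ Finset.range n', f (i + 2)) + f 1 + f 0 := by
      rw [show n' + 1 + 1 + 0 = (n' + 1) + 1 by omega, Finset.sum_range_succ' f (n' + 1),
        Finset.sum_range_succ' (fun i => f (i + 1)) n']
    rw [hsplit]
    have hz : (∑ i ∈ Finset.range n', f (i + 2)) = 0 := by
      refine Finset.sum_eq_zero fun i hi => ?_
      have hi' : i < n' := Finset.mem_range.mp hi
      have : gchooseM2 (i + 2) (n' + 1) = 0 := by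
        simp only [gchooseM2]
        split_ifs <;> try first | contradiction | omega
        rw [show i + 2 - 2 = i by omega, show n' + 1 - 1 = n' by omega,
          Nat.choose_eq_zero_of_lt hi']
        norm_num
      simp [hf, this]
    rw [hz]
    have hg0 : gchooseM2 0 (n' + 1) = (-1 : ℚ) ^ n' * ((n' : ℚ) + 1) := by
      simp [gchooseM2]
    have hg1 : gchooseM2 1 (n' + 1) = (-1 : ℚ) ^ n' := by
      simp [gchooseM2]
    have hs0 : (-1 : ℚ) ^ (n' + 1) * ((-1 : ℚ) ^ n' * ((n' : ℚ) + 1)) = -((n' : ℚ) + 1) := by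
      rw [← mul_assoc, ← pow_add, show n' + 1 + n' = 2 * n' + 1 by omega, pow_succ, pow_mul]
      norm_num
    have hs1 : (-1 : ℚ) ^ (1 + (n' + 1)) * (-1 : ℚ) ^ n' = 1 := by
      rw [← pow_add, show 1 + (n' + 1) + n' = 2 * (n' + 1) by omega, pow_mul]
      norm_num
    have hf0 : f 0 = -((n' : ℚ) + 1) * (((n' + k + 2).choose (k + 1) : ℕ) : ℚ) := by
      rw [hf]
      simp only [zero_add, add_zero, Nat.choose_self, Nat.cast_one, one_mul, hg0,
        show n' + 1 + k + 1 = n' + k + 2 by omega]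
      rw [mul_assoc, hs0]
      ring
    have hf1 : f 1 = ((k : ℚ) + 1) * (((n' + k + 2).choose (k + 2) : ℕ) : ℚ) := by
      rw [hf]
      simp only [hg1, add_zero, show n' + 1 + k + 1 = n' + k + 2 by omega,
        show 1 + k = k + 1 by omega, show k + 1 + 1 = k + 2 by omega,
        Nat.choose_succ_self_right]
      rw [mul_assoc, hs1]
      push_cast
      ring
    rw [hf0, hf1, zero_add]
    -- now pure binomial algebra
    have h1 : (((k + (n' + 1) + 2).choose (k + 2) : ℕ) : ℚ)
        = (((n' + k + 2).choose (k + 1) : ℕ) : ℚ) + (((n' + k + 2).choose (k + 2) : ℕ) : ℚ) := by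
      rw [show k + (n' + 1) + 2 = (n' + k + 2) + 1 by omega]
      exact_mod_cast congrArg (Nat.cast (R := ℚ)) (Nat.choose_succ_succ' (n' + k + 2) (k + 1))
    have h2 : ((n' : ℚ) + k + 3) * (((n' + k + 2).choose (k + 1) : ℕ) : ℚ)
        = ((k : ℚ) + 2) * (((k + (n' + 1) + 2).choose (k + 2) : ℕ) : ℚ) := by
      have h' : (n' + k + 3) * (n' + k + 2).choose (k + 1)
          = (k + (n' + 1) + 2).choose (k + 2) * (k + 2) := by
        have h := Nat.add_one_mul_choose_eq (n' + k + 2) (k + 1)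
        rw [show k + (n' + 1) + 2 = (n' + k + 2) + 1 by omega]
        simpa [Nat.succ_eq_add_one] using h
      have h'' := congrArg (Nat.cast (R := ℚ)) h'
      push_cast at h''
      linear_combination h''
    have hden : ((k : ℚ) + ((n' : ℚ) + 1) + 2) ≠ 0 := by positivity
    rw [eq_div_iff (by push_cast; exact hden)]
    push_cast at h1 h2 ⊢
    linear_combination (-((k : ℚ) + 1) * ((k : ℚ) + (n' : ℚ) + 3)) * h1
      + (-((n' : ℚ) + (k : ℚ) + 2)) * h2
  | succ d ih =>
    set R := n + k + 1 + d with hR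
    have key : ∀ m ∈ Finset.range (n + 1 + (d + 1)),
        ((m + k).choose k : ℚ) * ((n + k + 1 + (d + 1)).choose (m + k + 1) : ℚ) *
            (-1 : ℚ) ^ (m + n) * gchooseM2 m n
          = ((m + k).choose k : ℚ) * (R.choose (m + k + 1) : ℚ) * (-1 : ℚ) ^ (m + n) *
              gchooseM2 m n
            + (R.choose k : ℚ) * (-1 : ℚ) ^ n *
              ((-1 : ℚ) ^ m * ((n + 1 + d).choose m : ℚ) * gchooseM2 m n) := by
      intro m hm
      have hm' : m ≤ n + 1 + d := by
        have := Finset.mem_range.mp hm; omega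
      have hc : (R.choose (m + k) : ℚ) * ((m + k).choose k : ℚ)
          = (R.choose k : ℚ) * ((n + 1 + d).choose m : ℚ) := by
        have := Nat.choose_mul (n := R) (Nat.le_add_left k m)
        rw [show R - k = n + 1 + d by omega, show m + k - k = m by omega] at this
        exact_mod_cast congrArg (Nat.cast (R := ℚ)) this
      have hpas : ((n + k + 1 + (d + 1)).choose (m + k + 1) : ℚ)
          = (R.choose (m + k) : ℚ) + (R.choose (m + k + 1) : ℚ) := by
        rw [show n + k + 1 + (d + 1) = R + 1 by omega]
        exact_mod_cast congrArg (Nat.cast (R := ℚ)) (Nat.choose_succ_succ' R (m + k))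
      rw [hpas, pow_add]
      linear_combination ((-1 : ℚ) ^ m * (-1 : ℚ) ^ n * gchooseM2 m n) * hc
    rw [Finset.sum_congr rfl key, Finset.sum_add_distrib]
    have e2 : (∑ m ∈ Finset.range (n + 1 + (d + 1)),
        (R.choose k : ℚ) * (-1 : ℚ) ^ n *
          ((-1 : ℚ) ^ m * ((n + 1 + d).choose m : ℚ) * gchooseM2 m n)) = 0 := by
      rw [← Finset.mul_sum, show n + 1 + (d + 1) = (n + 1 + d) + 1 by omega,
        lemA n hn1 (n + 1 + d) (by omega), mul_zero]
    rw [e2, add_zero, show n + 1 + (d + 1) = (n + 1 + d) + 1 by omega,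
      Finset.sum_range_succ]
    have hzero : (R.choose (n + 1 + d + k + 1) : ℚ) = 0 := by
      rw [Nat.choose_eq_zero_of_lt (by omega)]
      norm_num
    rw [hzero]
    simpa using ih

theorem sum_identity_three (r k n : ℕ) (hr : 2 ≤ r) (hk1 : 1 ≤ k) (hk : k ≤ r - 1)
    (hn1 : 1 ≤ n) (hn : n ≤ r - 1 - k) :
    (∑ m ∈ Finset.range (r - k), ((m + k).choose k : ℚ) * (r.choose (m + k + 1) : ℚ) *
        (-1 : ℚ) ^ (m + n) * gchooseM2 m n) =
      -(n : ℚ) * ((k + n + 2).choose (k + 2) : ℚ) / ((k : ℚ) + n + 2) := by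
  obtain ⟨d, rfl⟩ : ∃ d, r = n + k + 1 + d := ⟨r - (n + k + 1), by omega⟩
  rw [show n + k + 1 + d - k = n + 1 + d by omega]
  exact lemM k n hk1 hn1 d
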